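/- Suppose q, p : ℝ → ℝ are differentiable functions satisfying q'(t) = p(t) − q(t)² − t/2 and p'(t) = 2q(t)p(t) + α. Then Q(t) = −q(t) and P(t) = −p(t) + 2q(t)² + t satisfy Q' = P − Q² − t/2 and P' = 2QP + (1 − α). -/

import Mathlib

/-- The Bäcklund transformation `π(q,p) = (−q, −p + 2q² + t)` maps solutions of the Hamiltonian
system of P_II(α) to solutions of the Hamiltonian system of P_II(1−α). -/
theorem stmt3 (α : ℝ) (q p : ℝ → ℝ)
    (hq : Differentiable ℝ q) (hp : Differentiable ℝ p)
    (h1 : ∀ t, deriv q t = p t - q t ^ 2 - t / 2)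
    (h2 : ∀ t, deriv p t = 2 * q t * p t + α) :
    (∀ t, deriv (fun s => -q s) t
        = (-p t + 2 * q t ^ 2 + t) - (-q t) ^ 2 - t / 2) ∧
    (∀ t, deriv (fun s => -p s + 2 * q s ^ 2 + s) t
        = 2 * (-q t) * (-p t + 2 * q t ^ 2 + t) + (1 - α)) := by
  constructor
  · intro t
    rw [deriv.fun_neg, h1]; ring
  · intro t
    have hd : HasDerivAt (fun s => -p s + 2 * q s ^ 2 + s)
        (-(deriv p t) + 2 * (2 * q t * deriv q t) + 1) t := by
      exact (((hp t).hasDerivAt.neg).add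
        (((hq t).hasDerivAt.pow 2).const_mul 2)).add (hasDerivAt_id t) |>.congr_deriv (by
          ring)
    rw [hd.deriv, h1, h2]; ring
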